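/- Let n, p, C̄ ≥ 1 be integers, η > 0, L > 0, γ_A ∈ (0,1), Q_A > 0, and fix k ≥ C̄−1. Let A_{k−C̄+1}, …, A_k be row-stochastic n×n matrices and φ_{k−C̄+1}, …, φ_{k+1} stochastic vectors in ℝ^n with φ_jᵀ = φ_{j+1}ᵀ A_j for each j. Let x_j, y_j ∈ (ℝ^p)^n (j = k−C̄+1, …, k+1 for x; j = k−C̄+1, …, k for y) satisfy the blockwise update x_{j+1}^i = ∑_{l=1}^n [A_j]_{il} x_j^l − η y_j^i. Define x̄_j = ∑_{i=1}^n [φ_j]_i x_j^i and x̃_j = (x_j^i − x̄_j)_{i=1}^n. Assume: (a) for all b ∈ (ℝ^p)^n, ‖((I_n − 1_n φ_{k+1}ᵀ)A_k A_{k−1}⋯A_{k−C̄+1} ⊗ I_p) b‖ ≤ γ_A ‖((I_n − 1_n φ_{k−C̄+1}ᵀ) ⊗ I_p) b‖; (b) for every j with k−C̄+2 ≤ j ≤ k+1 and all c ∈ (ℝ^p)^n, ‖((I_n − 1_n φ_{k+1}ᵀ)A_k⋯A_j ⊗ I_p) c‖ ≤ Q_A ‖c‖ (the matrix product being I_n when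 j = k+1); and (c) there are nonnegative reals ρ_j, σ_j with ‖y_j‖ ≤ nL‖x̃_j‖ + nLρ_j + σ_j for j = k−C̄+1, …, k. Then ‖x̃_{k+1}‖ ≤ (γ_A + ηQ_A nL)‖x̃_{k−C̄+1}‖ + ηQ_A nL ∑_{l=0}^{C̄−2}‖x̃_{k−l}‖ + ηQ_A nL (ρ_{k−C̄+1} + ∑_{l=0}^{C̄−2} ρ_{k−l}) + ηQ_A (σ_{k−C̄+1} + ∑_{l=0}^{C̄−2} σ_{k−l}). -/

import Mathlib

open Matrix

/-- The block ℓ₂ norm on `(ℝ^p)^n`: `‖x‖ = (∑_i ‖x^i‖₂²)^{1/2}`. -/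
noncomputable def bnorm {n p : ℕ} (x : Fin n → EuclideanSpace ℝ (Fin p)) : ℝ :=
  Real.sqrt (∑ i, ‖x i‖ ^ 2)

/-- The blockwise action `(M ⊗ I_p)` of an `n×n` matrix on `(ℝ^p)^n`:
`((M ⊗ I_p)x)^i = ∑_j M_{ij} x^j`. -/
noncomputable def mapp {n p : ℕ} (M : Matrix (Fin n) (Fin n) ℝ)
    (x : Fin n → EuclideanSpace ℝ (Fin p)) : Fin n → EuclideanSpace ℝ (Fin p) :=
  fun i => ∑ j, M i j • x j

/-- The matrix `I_n − 1_n φᵀ`. -/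
noncomputable def proj {n : ℕ} (φ : Fin n → ℝ) : Matrix (Fin n) (Fin n) ℝ :=
  1 - Matrix.vecMulVec (fun _ => 1) φ

/-- The backward matrix product `A_hi ⋯ A_lo` (empty product, when `hi + 1 ≤ lo`, is `I`). -/
noncomputable def bprod {n : ℕ} (A : ℕ → Matrix (Fin n) (Fin n) ℝ) (lo hi : ℕ) :
    Matrix (Fin n) (Fin n) ℝ :=
  (((List.range (hi + 1 - lo)).map fun t => A (lo + t)).reverse).prod

section helpers
variable {n p : ℕ}

noncomputable def toL2 {n p : ℕ} (x : Fin n → EuclideanSpace ℝ (Fin p)) :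
    PiLp 2 (fun _ : Fin n => EuclideanSpace ℝ (Fin p)) := WithLp.toLp 2 x

lemma bnorm_eq_norm (x : Fin n → EuclideanSpace ℝ (Fin p)) : bnorm x = ‖toL2 x‖ := by
  rw [PiLp.norm_eq_of_L2]; rfl

lemma toL2_sub (a b : Fin n → EuclideanSpace ℝ (Fin p)) : toL2 (a - b) = toL2 a - toL2 b := rfl
lemma toL2_smul (c : ℝ) (a : Fin n → EuclideanSpace ℝ (Fin p)) : toL2 (c • a) = c • toL2 a := rfl
lemma toL2_sum {s : Finset ℕ} (f : ℕ → Fin n → EuclideanSpace ℝ (Fin p)) :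
    toL2 (∑ m ∈ s, f m) = ∑ m ∈ s, toL2 (f m) := by
  classical
  induction s using Finset.induction with
  | empty => rfl
  | insert a s h ih => rw [Finset.sum_insert h, Finset.sum_insert h, ← ih]; rfl

lemma bnorm_nonneg (x : Fin n → EuclideanSpace ℝ (Fin p)) : 0 ≤ bnorm x := by
  rw [bnorm_eq_norm]; exact norm_nonneg _

lemma mapp_one (x : Fin n → EuclideanSpace ℝ (Fin p)) : mapp 1 x = x := by
  funext i
  simp [mapp, Matrix.one_apply, ite_smul]

lemma mapp_mul (M N : Matrix (Fin n) (Fin n) ℝ) (x : Fin n → EuclideanSpace ℝ (Fin p)) :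
    mapp (M * N) x = mapp M (mapp N x) := by
  funext i
  simp only [mapp, Matrix.mul_apply, Finset.sum_smul, Finset.smul_sum, mul_smul]
  rw [Finset.sum_comm]

lemma mapp_sub (M : Matrix (Fin n) (Fin n) ℝ) (a b : Fin n → EuclideanSpace ℝ (Fin p)) :
    mapp M (a - b) = mapp M a - mapp M b := by
  funext i
  simp [mapp, smul_sub, Finset.sum_sub_distrib]

lemma mapp_smul (M : Matrix (Fin n) (Fin n) ℝ) (c : ℝ) (a : Fin n → EuclideanSpace ℝ (Fin p)) :
    mapp M (c • a) = c • mapp M a := by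
  funext i
  simp [mapp, Finset.smul_sum, smul_comm c]

lemma mapp_sum (M : Matrix (Fin n) (Fin n) ℝ) {s : Finset ℕ}
    (f : ℕ → Fin n → EuclideanSpace ℝ (Fin p)) :
    mapp M (∑ m ∈ s, f m) = ∑ m ∈ s, mapp M (f m) := by
  funext i
  simp only [mapp, Finset.sum_apply, Finset.smul_sum]
  rw [Finset.sum_comm]

lemma bprod_empty (A : ℕ → Matrix (Fin n) (Fin n) ℝ) (lo hi : ℕ) (h : hi < lo) :
    bprod A lo hi = 1 := by
  have : hi + 1 - lo = 0 := by omega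
  simp [bprod, this]

lemma bprod_step (A : ℕ → Matrix (Fin n) (Fin n) ℝ) (lo hi : ℕ) (h : lo ≤ hi) :
    bprod A lo hi = bprod A (lo + 1) hi * A lo := by
  have h1 : hi + 1 - lo = (hi + 1 - (lo + 1)) + 1 := by omega
  unfold bprod
  rw [h1, List.range_succ_eq_map, List.map_cons, List.map_map, List.reverse_cons,
    List.prod_append, List.prod_cons, List.prod_nil, mul_one]
  have h2 : List.map ((fun t => A (lo + t)) ∘ Nat.succ) (List.range (hi + 1 - (lo + 1)))
      = List.map (fun t => A (lo + 1 + t)) (List.range (hi + 1 - (lo + 1))) := by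
    apply List.map_congr_left
    intro t _
    have : lo + Nat.succ t = lo + 1 + t := by omega
    simp only [Function.comp_apply, this]
  rw [h2]
  norm_num

lemma sum_Ico_reindex {M : Type*} [AddCommMonoid M] (f : ℕ → M) (k Cb : ℕ)
    (h1 : 1 ≤ Cb) (h2 : Cb ≤ k + 1) :
    ∑ m ∈ Finset.Ico (k + 1 - Cb) (k + 1), f m
      = f (k + 1 - Cb) + ∑ l ∈ Finset.range (Cb - 1), f (k - l) := by
  have key : ∑ m ∈ Finset.Ico (k + 1 - Cb) (k + 1), f m = ∑ l ∈ Finset.range Cb, f (k - l) := by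
    refine Finset.sum_nbij' (fun m => k - m) (fun l => k - l) ?_ ?_ ?_ ?_ ?_ <;>
      intro a ha <;> simp only [Finset.mem_Ico, Finset.mem_range] at * <;> try omega
    congr 1; omega
  rw [key]
  obtain ⟨c, rfl⟩ : ∃ c, Cb = c + 1 := ⟨Cb - 1, by omega⟩
  rw [Finset.sum_range_succ]
  have e1 : k - c = k + 1 - (c + 1) := by omega
  have e2 : c + 1 - 1 = c := by omega
  rw [e1, e2, add_comm]

end helpers

/-- Multi-step bound on the weighted consensus error `x̃` (Lemma 5 of the paper). -/
theorem stmt7 (n p Cb : ℕ) (hn : 1 ≤ n) (hp : 1 ≤ p) (hCb : 1 ≤ Cb)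
    (η L γA QA : ℝ) (hη : 0 < η) (hL : 0 < L)
    (hγA : γA ∈ Set.Ioo (0 : ℝ) 1) (hQA : 0 < QA)
    (k : ℕ) (hk : Cb - 1 ≤ k)
    (A : ℕ → Matrix (Fin n) (Fin n) ℝ)
    (hAnn : ∀ j, k + 1 - Cb ≤ j → j ≤ k → ∀ i l, 0 ≤ A j i l)
    (hArow : ∀ j, k + 1 - Cb ≤ j → j ≤ k → ∀ i, ∑ l, A j i l = 1)
    (φ : ℕ → Fin n → ℝ)
    (hφst : ∀ j, k + 1 - Cb ≤ j → j ≤ k + 1 → (∀ i, 0 ≤ φ j i) ∧ ∑ i, φ j i = 1)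
    (hφabs : ∀ j, k + 1 - Cb ≤ j → j ≤ k → φ j = Matrix.vecMul (φ (j + 1)) (A j))
    (x y : ℕ → Fin n → EuclideanSpace ℝ (Fin p))
    (hupd : ∀ j, k + 1 - Cb ≤ j → j ≤ k →
      ∀ i, x (j + 1) i = (∑ l, A j i l • x j l) - η • y j i)
    (xbar : ℕ → EuclideanSpace ℝ (Fin p))
    (hxbar : ∀ j, xbar j = ∑ i, φ j i • x j i)
    (xtld : ℕ → Fin n → EuclideanSpace ℝ (Fin p))
    (hxtld : ∀ j i, xtld j i = x j i - xbar j)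
    (ha : ∀ b : Fin n → EuclideanSpace ℝ (Fin p),
      bnorm (mapp (proj (φ (k + 1)) * bprod A (k + 1 - Cb) k) b) ≤
        γA * bnorm (mapp (proj (φ (k + 1 - Cb))) b))
    (hb : ∀ j, k + 2 - Cb ≤ j → j ≤ k + 1 → ∀ c : Fin n → EuclideanSpace ℝ (Fin p),
      bnorm (mapp (proj (φ (k + 1)) * bprod A j k) c) ≤ QA * bnorm c)
    (ρ σ : ℕ → ℝ)
    (hρ : ∀ j, 0 ≤ ρ j) (hσ : ∀ j, 0 ≤ σ j)
    (hc : ∀ j, k + 1 - Cb ≤ j → j ≤ k →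
      bnorm (y j) ≤ n * L * bnorm (xtld j) + n * L * ρ j + σ j) :
    bnorm (xtld (k + 1)) ≤
      (γA + η * QA * n * L) * bnorm (xtld (k + 1 - Cb)) +
        η * QA * n * L * ∑ l ∈ Finset.range (Cb - 1), bnorm (xtld (k - l)) +
        η * QA * n * L * (ρ (k + 1 - Cb) + ∑ l ∈ Finset.range (Cb - 1), ρ (k - l)) +
        η * QA * (σ (k + 1 - Cb) + ∑ l ∈ Finset.range (Cb - 1), σ (k - l)) := by
  have hCbk : Cb ≤ k + 1 := by omega
  -- x̃ in terms of proj
  have hxt : ∀ j, xtld j = mapp (proj (φ j)) (x j) := by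
    intro j
    funext i
    rw [hxtld, hxbar]
    simp only [mapp, proj, Matrix.sub_apply, Matrix.one_apply, Matrix.vecMulVec_apply,
      sub_smul, Finset.sum_sub_distrib, ite_smul, one_smul, zero_smul,
      Finset.sum_ite_eq', Finset.sum_ite_eq, Finset.mem_univ, if_true, one_mul]
  -- telescoping identity
  have tele : ∀ d, d ≤ Cb → x (k + 1) = mapp (bprod A (k + 1 - d) k) (x (k + 1 - d))
      - η • ∑ m ∈ Finset.Ico (k + 1 - d) (k + 1), mapp (bprod A (m + 1) k) (y m) := by
    intro d
    induction d with
    | zero =>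
      intro _
      simp only [Nat.sub_zero]
      rw [bprod_empty A (k + 1) k (by omega), mapp_one, Finset.Ico_self, Finset.sum_empty,
        smul_zero, sub_zero]
    | succ d ih =>
      intro hd
      have e2 : k + 1 - (d + 1) = k - d := by omega
      have e1 : k + 1 - d = (k - d) + 1 := by omega
      have hj1 : k + 1 - Cb ≤ k - d := by omega
      have hj2 : k - d ≤ k := by omega
      have hx1 : x ((k - d) + 1) = mapp (A (k - d)) (x (k - d)) - η • y (k - d) := by
        funext i; exact hupd (k - d) hj1 hj2 i
      rw [e2, ih (by omega), e1, hx1, mapp_sub, mapp_smul, ← mapp_mul,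
        ← bprod_step A (k - d) k hj2,
        Finset.sum_eq_sum_Ico_succ_bot (by omega : k - d < k + 1), smul_add, sub_sub]
  -- main identity for x̃_{k+1}
  have hmain : xtld (k + 1) = mapp (proj (φ (k + 1)) * bprod A (k + 1 - Cb) k) (x (k + 1 - Cb))
      - η • ∑ m ∈ Finset.Ico (k + 1 - Cb) (k + 1),
          mapp (proj (φ (k + 1)) * bprod A (m + 1) k) (y m) := by
    rw [hxt, tele Cb le_rfl, mapp_sub, mapp_smul, mapp_sum]
    simp only [← mapp_mul]
  -- triangle inequality
  have htri : bnorm (xtld (k + 1)) ≤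
      bnorm (mapp (proj (φ (k + 1)) * bprod A (k + 1 - Cb) k) (x (k + 1 - Cb)))
      + η * ∑ m ∈ Finset.Ico (k + 1 - Cb) (k + 1),
          bnorm (mapp (proj (φ (k + 1)) * bprod A (m + 1) k) (y m)) := by
    rw [hmain, bnorm_eq_norm, toL2_sub, toL2_smul, toL2_sum]
    refine le_trans (norm_sub_le _ _) ?_
    rw [norm_smul, Real.norm_eq_abs, abs_of_pos hη, ← bnorm_eq_norm]
    gcongr
    refine le_trans (norm_sum_le _ _) ?_
    apply le_of_eq
    apply Finset.sum_congr rfl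
    intro m _
    rw [← bnorm_eq_norm]
  -- bound first term
  have hA' := ha (x (k + 1 - Cb))
  rw [← hxt] at hA'
  -- bound summands
  have hsb : ∀ m ∈ Finset.Ico (k + 1 - Cb) (k + 1),
      bnorm (mapp (proj (φ (k + 1)) * bprod A (m + 1) k) (y m)) ≤
        QA * (n * L * bnorm (xtld m) + n * L * ρ m + σ m) := by
    intro m hm
    simp only [Finset.mem_Ico] at hm
    refine le_trans (hb (m + 1) (by omega) (by omega) (y m)) ?_
    exact mul_le_mul_of_nonneg_left (hc m (by omega) (by omega)) hQA.le
  have hbound : bnorm (xtld (k + 1)) ≤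
      γA * bnorm (xtld (k + 1 - Cb)) + η * ∑ m ∈ Finset.Ico (k + 1 - Cb) (k + 1),
        QA * (n * L * bnorm (xtld m) + n * L * ρ m + σ m) := by
    refine le_trans htri (add_le_add hA' ?_)
    exact mul_le_mul_of_nonneg_left (Finset.sum_le_sum hsb) hη.le
  rw [sum_Ico_reindex (fun m => QA * (n * L * bnorm (xtld m) + n * L * ρ m + σ m)) k Cb hCb hCbk]
    at hbound
  have hsplit : ∑ l ∈ Finset.range (Cb - 1),
        QA * (n * L * bnorm (xtld (k - l)) + n * L * ρ (k - l) + σ (k - l))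
      = QA * (n * L) * (∑ l ∈ Finset.range (Cb - 1), bnorm (xtld (k - l)))
        + QA * (n * L) * (∑ l ∈ Finset.range (Cb - 1), ρ (k - l))
        + QA * (∑ l ∈ Finset.range (Cb - 1), σ (k - l)) := by
    rw [Finset.mul_sum, Finset.mul_sum, Finset.mul_sum, ← Finset.sum_add_distrib,
      ← Finset.sum_add_distrib]
    apply Finset.sum_congr rfl
    intro l _
    ring
  rw [hsplit] at hbound
  set X0 := bnorm (xtld (k + 1 - Cb))
  set S1 := ∑ l ∈ Finset.range (Cb - 1), bnorm (xtld (k - l))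
  set S2 := ∑ l ∈ Finset.range (Cb - 1), ρ (k - l)
  set S3 := ∑ l ∈ Finset.range (Cb - 1), σ (k - l)
  linarith [hbound]
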